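/- Let (ρ, V) be a representation of an Abelian group G, A ⊆ G finite nonempty, and Y a nonzero finite-dimensional subspace of V with dim(A · Y) ≤ α · dim Y. Then there exists a nonzero subspace Z ⊆ Y such that dim(AC · Z) ≤ α · dim(C · Z) for every finite subset C of G; consequently dim(Aⁿ · Z) ≤ αⁿ dim Z for all n ≥ 1. -/
import Mathlib

open Pointwise Module

namespace Stmt19Aux

variable {G k V : Type*} [CommGroup G] [Field k] [AddCommGroup V] [Module k V]
variable (ρ : Representation k G V)

/-- The span of `{g • w : g ∈ C, w ∈ W}`. -/
noncomputable def act (C : Finset G) (W : Submodule k V) : Submodule k V :=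
  ⨆ g ∈ C, W.map (ρ g)

theorem map_rho_one (W : Submodule k V) : W.map (ρ 1) = W := by
  rw [map_one, Module.End.one_eq_id, Submodule.map_id]

theorem map_rho_mul (a b : G) (W : Submodule k V) :
    W.map (ρ (a * b)) = (W.map (ρ b)).map (ρ a) := by
  rw [map_mul, Module.End.mul_eq_comp, Submodule.map_comp]

theorem map_rho_cancel (g : G) (W : Submodule k V) :
    (W.map (ρ g)).map (ρ g⁻¹) = W := by
  rw [← map_rho_mul, inv_mul_cancel, map_rho_one]

/-- `ρ g` as a linear equivalence. -/
noncomputable def rhoEquiv (g : G) : V ≃ₗ[k] V :=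
  LinearEquiv.ofLinear (ρ g) (ρ g⁻¹)
    (by rw [← Module.End.mul_eq_comp, ← map_mul, mul_inv_cancel, map_one, Module.End.one_eq_id])
    (by rw [← Module.End.mul_eq_comp, ← map_mul, inv_mul_cancel, map_one, Module.End.one_eq_id])

theorem finrank_map_rho (g : G) (W : Submodule k V) :
    finrank k (W.map (ρ g)) = finrank k W := by
  have : ρ g = (rhoEquiv ρ g : V →ₗ[k] V) := rfl
  rw [this]
  exact LinearEquiv.finrank_map_eq (rhoEquiv ρ g) W

theorem act_empty (W : Submodule k V) : act ρ (∅ : Finset G) W = ⊥ := by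
  simp [act]

theorem act_insert [DecidableEq G] (c : G) (C : Finset G) (W : Submodule k V) :
    act ρ (insert c C) W = W.map (ρ c) ⊔ act ρ C W := by
  unfold act
  rw [← Finset.sup_eq_iSup, ← Finset.sup_eq_iSup, Finset.sup_insert]

theorem act_singleton_one (W : Submodule k V) : act ρ ({1} : Finset G) W = W := by
  rw [act, ← Finset.sup_eq_iSup, Finset.sup_singleton, map_rho_one]

theorem act_mono {W₁ W₂ : Submodule k V} (h : W₁ ≤ W₂) (C : Finset G) :
    act ρ C W₁ ≤ act ρ C W₂ := by
  refine iSup₂_le fun g hg => ?_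
  exact le_trans (Submodule.map_mono h) (le_iSup₂ (f := fun g _ => W₂.map (ρ g)) g hg)

theorem act_sup (C : Finset G) (W₁ W₂ : Submodule k V) :
    act ρ C (W₁ ⊔ W₂) = act ρ C W₁ ⊔ act ρ C W₂ := by
  unfold act
  rw [← Finset.sup_eq_iSup, ← Finset.sup_eq_iSup, ← Finset.sup_eq_iSup, ← Finset.sup_sup]
  congr 1
  funext g
  exact Submodule.map_sup W₁ W₂ (ρ g)

theorem act_map_comm (C : Finset G) (g : G) (W : Submodule k V) :
    act ρ C (W.map (ρ g)) = (act ρ C W).map (ρ g) := by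
  unfold act
  rw [Submodule.map_iSup]
  refine iSup_congr fun c => ?_
  rw [Submodule.map_iSup]
  refine iSup_congr fun _ => ?_
  rw [← map_rho_mul, ← map_rho_mul, mul_comm]

theorem act_mul [DecidableEq G] (A C : Finset G) (W : Submodule k V) :
    act ρ (A * C) W = act ρ A (act ρ C W) := by
  apply le_antisymm
  · refine iSup₂_le fun g hg => ?_
    obtain ⟨a, ha, c, hc, rfl⟩ := Finset.mem_mul.mp hg
    rw [map_rho_mul]
    refine le_trans (Submodule.map_mono ?_) (le_iSup₂ (f := fun a _ => (act ρ C W).map (ρ a)) a ha)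
    exact le_iSup₂ (f := fun c _ => W.map (ρ c)) c hc
  · refine iSup₂_le fun a ha => ?_
    unfold act
    rw [Submodule.map_iSup]
    refine iSup_le fun c => ?_
    rw [Submodule.map_iSup]
    refine iSup_le fun hc => ?_
    rw [← map_rho_mul]
    exact le_iSup₂ (f := fun g _ => W.map (ρ g)) (a * c) (Finset.mul_mem_mul ha hc)

theorem act_fd (C : Finset G) (W : Submodule k V) [FiniteDimensional k W] :
    FiniteDimensional k (act ρ C W) := by
  rw [act, ← Finset.sup_eq_iSup]
  infer_instance

theorem act_bot (C : Finset G) : act ρ C (⊥ : Submodule k V) = ⊥ := by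
  simp [act]

theorem key [DecidableEq G] (A : Finset G) (Y Z : Submodule k V) [FiniteDimensional k Y]
    (hZY : Z ≤ Y) (α₀ : ℝ)
    (hmin : ∀ W : Submodule k V, W ≤ Y →
      α₀ * (finrank k W : ℝ) ≤ (finrank k (act ρ A W) : ℝ))
    (heq : (finrank k (act ρ A Z) : ℝ) = α₀ * (finrank k Z : ℝ)) :
    ∀ C : Finset G,
      (finrank k (act ρ (A * C) Z) : ℝ) ≤ α₀ * (finrank k (act ρ C Z) : ℝ) := by
  haveI hZfd : FiniteDimensional k Z := Submodule.finiteDimensional_of_le hZY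
  intro C
  induction C using Finset.induction_on with
  | empty => rw [Finset.mul_empty, act_empty]; simp
  | @insert c C hc IH =>
    set U := act ρ C Z with hU
    set X := Z.map (ρ c) with hX
    haveI : FiniteDimensional k U := act_fd ρ C Z
    haveI : FiniteDimensional k X := inferInstance
    haveI : FiniteDimensional k (act ρ A U) := act_fd ρ A U
    haveI : FiniteDimensional k (act ρ A X) := act_fd ρ A X
    have e1 : act ρ (A * insert c C) Z = act ρ A X ⊔ act ρ A U := by
      rw [act_mul, act_insert, act_sup]
    have e2 : act ρ (insert c C) Z = X ⊔ U := act_insert ρ c C Z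
    have h1 : finrank k ↥(act ρ A X ⊔ act ρ A U) + finrank k ↥(act ρ A X ⊓ act ρ A U)
        = finrank k ↥(act ρ A X) + finrank k ↥(act ρ A U) :=
      Submodule.finrank_sup_add_finrank_inf_eq _ _
    have h2 : finrank k ↥(X ⊔ U) + finrank k ↥(X ⊓ U) = finrank k ↥X + finrank k ↥U :=
      Submodule.finrank_sup_add_finrank_inf_eq _ _
    have hAU : (finrank k ↥(act ρ A U) : ℝ) ≤ α₀ * finrank k ↥U := by
      rw [hU, ← act_mul]; exact IH
    have hAX : (finrank k ↥(act ρ A X) : ℝ) = α₀ * finrank k ↥X := by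
      rw [hX, act_map_comm, finrank_map_rho, heq, finrank_map_rho]
    -- the intersection estimate
    obtain ⟨Z', hZ'⟩ : ∃ Z', Z' = (X ⊓ U).map (ρ c⁻¹) := ⟨_, rfl⟩
    have hZ'Z : Z' ≤ Z :=
      calc Z' = (X ⊓ U).map (ρ c⁻¹) := hZ'
      _ ≤ X.map (ρ c⁻¹) := Submodule.map_mono inf_le_left
      _ = Z := map_rho_cancel ρ c Z
    have hmap : Z'.map (ρ c) = X ⊓ U := by
      have h0 := map_rho_cancel ρ c⁻¹ (X ⊓ U)
      rw [inv_inv] at h0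
      rw [hZ', h0]
    have h3 : α₀ * (finrank k ↥(X ⊓ U) : ℝ) ≤ (finrank k ↥(act ρ A X ⊓ act ρ A U) : ℝ) := by
      have hfr : finrank k ↥Z' = finrank k ↥(X ⊓ U) := by
        rw [hZ']; exact finrank_map_rho ρ c⁻¹ _
      have hact : finrank k ↥(act ρ A (X ⊓ U)) = finrank k ↥(act ρ A Z') := by
        rw [← hmap, act_map_comm, finrank_map_rho]
      have hle : act ρ A (X ⊓ U) ≤ act ρ A X ⊓ act ρ A U :=
        le_inf (act_mono ρ inf_le_left A) (act_mono ρ inf_le_right A)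
      have h4 : finrank k ↥(act ρ A (X ⊓ U)) ≤ finrank k ↥(act ρ A X ⊓ act ρ A U) :=
        Submodule.finrank_mono hle
      have h5 := hmin Z' (hZ'Z.trans hZY)
      rw [hfr] at h5
      rw [← hact] at h5
      exact h5.trans (by exact_mod_cast h4)
    rw [e1, e2]
    have hs : (finrank k ↥(X ⊔ U) : ℝ)
        = (finrank k ↥X : ℝ) + finrank k ↥U - finrank k ↥(X ⊓ U) := by
      have h2' : (finrank k ↥(X ⊔ U) : ℝ) + finrank k ↥(X ⊓ U)
          = finrank k ↥X + finrank k ↥U := by exact_mod_cast h2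
      linarith
    have h6 : α₀ * (finrank k ↥(X ⊔ U) : ℝ)
        = α₀ * finrank k ↥X + α₀ * finrank k ↥U - α₀ * finrank k ↥(X ⊓ U) := by
      rw [hs]; ring
    have h1' : (finrank k ↥(act ρ A X ⊔ act ρ A U) : ℝ)
        + finrank k ↥(act ρ A X ⊓ act ρ A U)
        = finrank k ↥(act ρ A X) + finrank k ↥(act ρ A U) := by exact_mod_cast h1
    linarith

end Stmt19Aux

open Stmt19Aux in
/-- For a representation of an Abelian group `G`: if `dim(A · Y) ≤ α · dim Y` with
`Y ≠ 0` finite-dimensional, there is a nonzero subspace `Z ⊆ Y` such that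
`dim(AC · Z) ≤ α · dim(C · Z)` for every finite `C ⊆ G`; consequently
`dim(Aⁿ · Z) ≤ αⁿ · dim Z` for all `n ≥ 1`. -/
theorem stmt_19 {G k V : Type*} [CommGroup G] [DecidableEq G]
    [Field k] [AddCommGroup V] [Module k V]
    (ρ : Representation k G V)
    (A : Finset G) (hA : A.Nonempty)
    (Y : Submodule k V) [FiniteDimensional k Y] (hY : Y ≠ ⊥)
    (α : ℝ) (hα : 0 ≤ α)
    (h : (Module.finrank k ↥(⨆ a ∈ A, Y.map (ρ a)) : ℝ) ≤ α * Module.finrank k Y) :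
    ∃ Z : Submodule k V, Z ≤ Y ∧ Z ≠ ⊥ ∧
      (∀ C : Finset G,
        (Module.finrank k ↥(⨆ g ∈ (A * C : Finset G), Z.map (ρ g)) : ℝ) ≤
          α * Module.finrank k ↥(⨆ g ∈ C, Z.map (ρ g))) ∧
      (∀ n : ℕ, 1 ≤ n →
        (Module.finrank k ↥(⨆ g ∈ (A ^ n : Finset G), Z.map (ρ g)) : ℝ) ≤
          α ^ n * Module.finrank k Z) := by
  classical
  have h' : (finrank k ↥(act ρ A Y) : ℝ) ≤ α * finrank k ↥Y := h
  haveI : FiniteDimensional k ↥(act ρ A Y) := act_fd ρ A Y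
  have hYpos : 0 < finrank k ↥Y := by
    rw [← Submodule.nontrivial_iff_ne_bot] at hY
    exact Module.finrank_pos
  -- the set of pairs (dim(A·W), dim W) over nonzero subspaces W ≤ Y
  set S : Set (ℕ × ℕ) := {p | ∃ W : Submodule k V, W ≤ Y ∧ W ≠ ⊥ ∧
    p.1 = finrank k ↥(act ρ A W) ∧ p.2 = finrank k ↥W} with hS
  have hSfin : S.Finite := by
    refine (Set.finite_Iic (finrank k ↥(act ρ A Y), finrank k ↥Y)).subset ?_
    rintro ⟨p1, p2⟩ ⟨W, hWY, -, hp1, hp2⟩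
    haveI : FiniteDimensional k ↥W := Submodule.finiteDimensional_of_le hWY
    constructor
    · exact hp1 ▸ Submodule.finrank_mono (act_mono ρ hWY A)
    · exact hp2 ▸ Submodule.finrank_mono hWY
  have hSne : S.Nonempty := ⟨(finrank k ↥(act ρ A Y), finrank k ↥Y), Y, le_rfl, hY, rfl, rfl⟩
  obtain ⟨p₀, hp₀S, hp₀min⟩ :=
    Set.exists_min_image S (fun p => (p.1 : ℝ) / p.2) hSfin hSne
  obtain ⟨Z, hZY, hZne, hp1, hp2⟩ := hp₀S
  haveI : FiniteDimensional k ↥Z := Submodule.finiteDimensional_of_le hZY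
  have hZpos : 0 < finrank k ↥Z := by
    rw [← Submodule.nontrivial_iff_ne_bot] at hZne
    exact Module.finrank_pos
  set α₀ : ℝ := (p₀.1 : ℝ) / p₀.2 with hα₀
  have hq : (0 : ℝ) < p₀.2 := by rw [hp2]; exact_mod_cast hZpos
  have hα₀nonneg : 0 ≤ α₀ := div_nonneg (Nat.cast_nonneg _) (Nat.cast_nonneg _)
  have heq : (finrank k ↥(act ρ A Z) : ℝ) = α₀ * finrank k ↥Z := by
    rw [← hp1, ← hp2, hα₀]
    field_simp
  have hmin : ∀ W : Submodule k V, W ≤ Y →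
      α₀ * (finrank k ↥W : ℝ) ≤ (finrank k ↥(act ρ A W) : ℝ) := by
    intro W hWY
    by_cases hbot : W = ⊥
    · subst hbot
      simp [act_bot]
    · haveI : FiniteDimensional k ↥W := Submodule.finiteDimensional_of_le hWY
      have hWpos : (0 : ℝ) < finrank k ↥W := by
        have : Nontrivial ↥W := Submodule.nontrivial_iff_ne_bot.mpr hbot
        exact_mod_cast (Module.finrank_pos : 0 < finrank k ↥W)
      have hmem : (finrank k ↥(act ρ A W), finrank k ↥W) ∈ S :=
        ⟨W, hWY, hbot, rfl, rfl⟩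
      have hmm := hp₀min _ hmem
      exact (le_div_iff₀ hWpos).mp hmm
  have hα₀le : α₀ ≤ α := by
    have h1 := hmin Y le_rfl
    have := h1.trans h'
    have hYposR : (0 : ℝ) < (finrank k ↥Y : ℝ) := by exact_mod_cast hYpos
    exact le_of_mul_le_mul_right this hYposR
  have hkey := key ρ A Y Z hZY α₀ hmin heq
  refine ⟨Z, hZY, hZne, ?_, ?_⟩
  · intro C
    calc (finrank k ↥(act ρ (A * C) Z) : ℝ) ≤ α₀ * finrank k ↥(act ρ C Z) := hkey C
    _ ≤ α * finrank k ↥(act ρ C Z) :=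
        mul_le_mul_of_nonneg_right hα₀le (Nat.cast_nonneg _)
  · intro n hn
    induction n, hn using Nat.le_induction with
    | base =>
      have h1 := hkey {1}
      rw [show A * ({1} : Finset G) = A by rw [Finset.mul_singleton]; simp [Finset.image_id'], act_singleton_one] at h1
      calc (finrank k ↥(act ρ (A ^ 1) Z) : ℝ) = finrank k ↥(act ρ A Z) := by rw [pow_one]
      _ ≤ α₀ * finrank k ↥Z := h1
      _ ≤ α * finrank k ↥Z := mul_le_mul_of_nonneg_right hα₀le (Nat.cast_nonneg _)
      _ = α ^ 1 * finrank k ↥Z := by rw [pow_one]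
    | succ n hn IH =>
      have h1 := hkey (A ^ n)
      calc (finrank k ↥(act ρ (A ^ (n + 1)) Z) : ℝ)
          = finrank k ↥(act ρ (A * A ^ n) Z) := by rw [pow_succ']
      _ ≤ α₀ * finrank k ↥(act ρ (A ^ n) Z) := h1
      _ ≤ α * finrank k ↥(act ρ (A ^ n) Z) :=
          mul_le_mul_of_nonneg_right hα₀le (Nat.cast_nonneg _)
      _ ≤ α * (α ^ n * finrank k ↥Z) := mul_le_mul_of_nonneg_left IH hα
      _ = α ^ (n + 1) * finrank k ↥Z := by ring
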